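/- Let g : ℝ → ℝ be given by g(x) = x²/2. For every δ > 0 there exists a convex, continuously differentiable function h : ℝ → ℝ whose derivative is Lipschitz continuous with constant 1, such that f = g - h is itself convex on ℝ and bounded below, while the DCA iterates defined by x₀ = 0 and x_{k+1} = the global minimizer over ℝ of x ↦ g(x) - h'(x_k)(x - x_k) satisfy |f'(x_k)|² = 1/(k+1)^{1+2δ} for all k ≥ 0. Hence even for convex objectives the DCA can converge this slowly. -/

import Mathlib

open Filter Topology intervalIntegral

namespace DCAslow

noncomputable def cc (p : ℝ) (k : ℕ) : ℝ := ((k : ℝ) + 1) ^ (-p)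
noncomputable def XX (p : ℝ) (k : ℕ) : ℝ := ∑ j ∈ Finset.range k, cc p j
noncomputable def lin (p : ℝ) (k : ℕ) (x : ℝ) : ℝ :=
  cc p k + (cc p (k + 1) / cc p k - 1) * (x - XX p k)
noncomputable def tt (p : ℝ) (k : ℕ) (x : ℝ) : ℝ := min 1 (lin p k x)
noncomputable def phi (p : ℝ) (x : ℝ) : ℝ := max 0 (⨆ k, tt p k x)

variable {p : ℝ}

lemma cc_pos (k : ℕ) : 0 < cc p k :=
  Real.rpow_pos_of_pos (by positivity) _

lemma cc_le_one (hp : 0 < p) (k : ℕ) : cc p k ≤ 1 :=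
  Real.rpow_le_one_of_one_le_of_nonpos (by norm_num) (by linarith)

lemma cc_zero : cc p 0 = 1 := by
  simp [cc]

-- base-monotonicity for negative exponents
lemma rpow_neg_anti (hp : 0 < p) {x y : ℝ} (hx : 0 < x) (hxy : x ≤ y) :
    y ^ (-p) ≤ x ^ (-p) := by
  rw [Real.rpow_neg (by linarith), Real.rpow_neg hx.le]
  exact inv_anti₀ (Real.rpow_pos_of_pos hx _) (Real.rpow_le_rpow hx.le hxy hp.le)

lemma cc_anti (hp : 0 < p) {k j : ℕ} (h : k ≤ j) : cc p j ≤ cc p k :=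
  rpow_neg_anti hp (by positivity) (by have : (k:ℝ) ≤ j := Nat.cast_le.2 h; linarith)

lemma ratio (hp : 0 < p) {k j : ℕ} (h : k ≤ j) :
    cc p (k + 1) * cc p j ≤ cc p k * cc p (j + 1) := by
  unfold cc
  push_cast
  rw [← Real.mul_rpow (by positivity) (by positivity),
    ← Real.mul_rpow (by positivity) (by positivity)]
  apply rpow_neg_anti hp (by positivity)
  have : (k : ℝ) ≤ j := Nat.cast_le.2 h
  nlinarith

lemma XX_zero : XX p 0 = 0 := by simp [XX]

lemma XX_succ (k : ℕ) : XX p (k + 1) = XX p k + cc p k := by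
  simp [XX, Finset.sum_range_succ]

lemma XX_mono : Monotone (XX p) :=
  monotone_nat_of_le_succ fun k => by rw [XX_succ]; linarith [cc_pos (p := p) k]

end DCAslow

namespace DCAslow

lemma slope_nonpos (hp : 0 < p) (k : ℕ) : cc p (k + 1) / cc p k - 1 ≤ 0 := by
  have := cc_anti hp (Nat.le_succ k)
  have := cc_pos (p := p) k
  have : cc p (k + 1) / cc p k ≤ 1 := (div_le_one (cc_pos k)).2 (cc_anti hp (Nat.le_succ k))
  linarith

lemma slope_ge (k : ℕ) : -1 ≤ cc p (k + 1) / cc p k - 1 := by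
  have h1 : 0 ≤ cc p (k + 1) / cc p k := le_of_lt (div_pos (cc_pos _) (cc_pos _))
  linarith

lemma lin_XX_self (k : ℕ) : lin p k (XX p k) = cc p k := by simp [lin]

lemma lin_XX_succ (k j : ℕ) :
    lin p k (XX p (j + 1)) = lin p k (XX p j) + (cc p (k + 1) / cc p k - 1) * cc p j := by
  simp only [lin, XX_succ]; ring

lemma lin_le_A (hp : 0 < p) (k : ℕ) : ∀ j, k ≤ j → lin p k (XX p j) ≤ cc p j := by
  intro j hj
  induction j, hj using Nat.le_induction with
  | base => rw [lin_XX_self]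
  | succ j hj ih =>
    rw [lin_XX_succ]
    have h1 : lin p k (XX p j) + (cc p (k + 1) / cc p k - 1) * cc p j ≤
        cc p j * (cc p (k + 1) / cc p k) := by
      have hcp := cc_pos (p := p) j
      have hs := slope_nonpos hp k
      nlinarith
    refine h1.trans ?_
    rw [mul_div_assoc', div_le_iff₀ (cc_pos k)]
    have := ratio hp hj
    nlinarith
  
lemma lin_le_B (hp : 0 < p) (k : ℕ) : ∀ i j, j + i = k → lin p k (XX p j) ≤ cc p j := by
  intro i
  induction i with
  | zero => intro j hj; simp at hj; subst hj; rw [lin_XX_self]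
  | succ i ih =>
    intro j hj
    have hjk : j ≤ k := by omega
    have ih' : lin p k (XX p (j + 1)) ≤ cc p (j + 1) := ih (j + 1) (by omega)
    have hrec := lin_XX_succ (p := p) k j
    have hr := ratio hp hjk
    have hck := cc_pos (p := p) k
    have hcj := cc_pos (p := p) j
    -- lin k (XX j) = lin k (XX (j+1)) - m * c j ≤ c (j+1) - m * c j ≤ c j
    have key : cc p (j + 1) - (cc p (k + 1) / cc p k - 1) * cc p j ≤ cc p j := by
      have : cc p (j + 1) ≤ cc p j * (cc p (k + 1) / cc p k) := by
        rw [mul_div_assoc', le_div_iff₀ (cc_pos k)]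
        nlinarith
      nlinarith
    linarith [hrec, ih']

lemma lin_le (hp : 0 < p) (k j : ℕ) : lin p k (XX p j) ≤ cc p j := by
  rcases le_or_gt k j with h | h
  · exact lin_le_A hp k j h
  · exact lin_le_B hp k (k - j) j (by omega)

end DCAslow

namespace DCAslow

lemma tt_bdd (x : ℝ) : BddAbove (Set.range fun k => tt p k x) :=
  ⟨1, by rintro _ ⟨k, rfl⟩; exact min_le_left _ _⟩

lemma phi_XX (hp : 0 < p) (j : ℕ) : phi p (XX p j) = cc p j := by
  have h1 : (⨆ k, tt p k (XX p j)) = cc p j := by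
    refine le_antisymm (ciSup_le fun k => ?_) ?_
    · exact (min_le_right _ _).trans (lin_le hp k j)
    · have h2 : tt p j (XX p j) = cc p j := by
        rw [tt, lin_XX_self, min_eq_right (cc_le_one hp j)]
      calc cc p j = tt p j (XX p j) := h2.symm
        _ ≤ ⨆ k, tt p k (XX p j) := le_ciSup (tt_bdd _) j
  rw [phi, h1, max_eq_right (cc_pos j).le]

lemma phi_nonneg (x : ℝ) : 0 ≤ phi p x := le_max_left _ _

lemma tt_anti (hp : 0 < p) (k : ℕ) {a b : ℝ} (hab : a ≤ b) : tt p k b ≤ tt p k a := by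
  refine min_le_min le_rfl ?_
  have hs := slope_nonpos hp k
  simp only [lin]
  nlinarith

lemma phi_anti (hp : 0 < p) : Antitone (phi p) := by
  intro a b hab
  refine max_le_max le_rfl (ciSup_le fun k => ?_)
  exact (tt_anti hp k hab).trans (le_ciSup (tt_bdd _) k)

lemma tt_lip (hp : 0 < p) (k : ℕ) {a b : ℝ} (hab : a ≤ b) :
    tt p k a ≤ tt p k b + (b - a) := by
  have hlin : lin p k a ≤ lin p k b + (b - a) := by
    have hs := slope_ge (p := p) k
    simp only [lin]
    nlinarith
  calc tt p k a = min 1 (lin p k a) := rfl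
    _ ≤ min (1 + (b - a)) (lin p k b + (b - a)) :=
        min_le_min (by linarith) hlin
    _ = min 1 (lin p k b) + (b - a) := min_add_add_right _ _ _
    _ = tt p k b + (b - a) := rfl

lemma phi_lip (hp : 0 < p) {a b : ℝ} (hab : a ≤ b) : phi p a ≤ phi p b + (b - a) := by
  have hs : (⨆ k, tt p k a) ≤ (⨆ k, tt p k b) + (b - a) :=
    ciSup_le fun k => (tt_lip hp k hab).trans (add_le_add (le_ciSup (tt_bdd _) k) le_rfl)
  have hd : (0:ℝ) ≤ b - a := by linarith
  refine max_le (add_nonneg (le_max_left _ _) hd) ?_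
  exact hs.trans (add_le_add (le_max_right _ _) le_rfl)

end DCAslow

namespace DCAslow

lemma phi_abs_lip (hp : 0 < p) (a b : ℝ) : |phi p a - phi p b| ≤ |a - b| := by
  rcases le_total a b with hab | hab
  · have h1 : phi p b ≤ phi p a := phi_anti hp hab
    have h2 := phi_lip hp hab
    rw [abs_of_nonpos (by linarith : a - b ≤ 0)]
    rw [abs_of_nonneg (by linarith : (0:ℝ) ≤ phi p a - phi p b)]
    linarith
  · have h1 : phi p a ≤ phi p b := phi_anti hp hab
    have h2 := phi_lip hp hab
    rw [abs_of_nonneg (by linarith : (0:ℝ) ≤ a - b)]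
    rw [abs_of_nonpos (by linarith : phi p a - phi p b ≤ 0)]
    linarith

lemma phi_cont (hp : 0 < p) : Continuous (phi p) := by
  have : LipschitzWith 1 (phi p) := by
    refine LipschitzWith.of_dist_le_mul fun a b => ?_
    rw [Real.dist_eq, Real.dist_eq, NNReal.coe_one, one_mul]
    exact phi_abs_lip hp a b
  exact this.continuous

noncomputable def hh (p : ℝ) (x : ℝ) : ℝ := x ^ 2 / 2 + ∫ s in (0:ℝ)..x, phi p s

noncomputable def FF (p : ℝ) (x : ℝ) : ℝ := ∫ s in (0:ℝ)..x, phi p s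

lemma FF_hasDerivAt (hp : 0 < p) (x : ℝ) : HasDerivAt (FF p) (phi p x) x :=
  ((phi_cont hp).integral_hasStrictDerivAt 0 x).hasDerivAt

lemma hh_hasDerivAt (hp : 0 < p) (x : ℝ) : HasDerivAt (hh p) (x + phi p x) x := by
  have h1 : HasDerivAt (fun x : ℝ => x ^ 2 / 2) x x := by
    simpa using (hasDerivAt_pow 2 x).div_const 2
  exact h1.add (FF_hasDerivAt hp x)

lemma hh_deriv (hp : 0 < p) : deriv (hh p) = fun x => x + phi p x :=
  funext fun x => (hh_hasDerivAt hp x).deriv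

lemma hh_diff (hp : 0 < p) : Differentiable ℝ (hh p) :=
  fun x => (hh_hasDerivAt hp x).differentiableAt

lemma derivh_mono (hp : 0 < p) : Monotone (fun x => x + phi p x) := by
  intro a b hab
  have := phi_lip hp hab
  simp only []
  linarith

lemma hh_convex (hp : 0 < p) : ConvexOn ℝ Set.univ (hh p) := by
  have := Monotone.convexOn_univ_of_deriv (hh_diff hp) (by rw [hh_deriv hp]; exact derivh_mono hp)
  exact this

lemma ff_hasDerivAt (hp : 0 < p) (x : ℝ) :
    HasDerivAt (fun t : ℝ => t ^ 2 / 2 - hh p t) (-(phi p x)) x := by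
  have h1 : HasDerivAt (fun x : ℝ => x ^ 2 / 2) x x := by
    simpa using (hasDerivAt_pow 2 x).div_const 2
  have := h1.sub (hh_hasDerivAt hp x)
  rw [show -(phi p x) = x - (x + phi p x) by ring]; exact this

lemma ff_deriv (hp : 0 < p) :
    deriv (fun t : ℝ => t ^ 2 / 2 - hh p t) = fun x => -(phi p x) :=
  funext fun x => (ff_hasDerivAt hp x).deriv

lemma ff_convex (hp : 0 < p) : ConvexOn ℝ Set.univ (fun t : ℝ => t ^ 2 / 2 - hh p t) := by
  refine Monotone.convexOn_univ_of_deriv (fun x => (ff_hasDerivAt hp x).differentiableAt) ?_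
  rw [ff_deriv hp]
  intro a b hab
  simpa using phi_anti hp hab

end DCAslow

namespace DCAslow

lemma cc_tendsto (hp : 0 < p) : Tendsto (cc p) atTop (𝓝 0) := by
  have h1 : Tendsto (fun k : ℕ => (k : ℝ) + 1) atTop atTop :=
    tendsto_atTop_add_const_right _ 1 tendsto_natCast_atTop_atTop
  exact (tendsto_rpow_neg_atTop hp).comp h1

lemma summable_ccsq (hp : 0 < p) (hp2 : 1 < 2 * p) :
    Summable (fun k => cc p k * cc p k) := by
  have h1 : Summable (fun n : ℕ => ((n : ℝ) + 1) ^ (-(2 * p))) := by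
    have := (_root_.summable_nat_add_iff (f := fun n : ℕ => (n : ℝ) ^ (-(2 * p))) 1).2
      (Real.summable_nat_rpow.2 (by linarith))
    refine this.congr fun n => ?_
    push_cast
    ring_nf
  refine h1.congr fun k => ?_
  rw [cc, ← Real.rpow_add (by positivity)]
  ring_nf

lemma phi_intInt (hp : 0 < p) (a b : ℝ) : IntervalIntegrable (phi p) MeasureTheory.volume a b :=
  (phi_cont hp).intervalIntegrable _ _

lemma FF_add (hp : 0 < p) (a b : ℝ) : FF p b = FF p a + ∫ s in a..b, phi p s := by
  rw [FF, FF, ← integral_add_adjacent_intervals (phi_intInt hp 0 a) (phi_intInt hp a b)]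

lemma FF_mono (hp : 0 < p) : Monotone (FF p) := by
  intro a b hab
  rw [FF_add hp a b]
  have : 0 ≤ ∫ s in a..b, phi p s :=
    intervalIntegral.integral_nonneg hab fun u _ => phi_nonneg u
  linarith

lemma FF_XX_le (hp : 0 < p) (n : ℕ) :
    FF p (XX p n) ≤ ∑ k ∈ Finset.range n, cc p k * cc p k := by
  induction n with
  | zero => simp [FF, XX_zero]
  | succ n ih =>
    rw [FF_add hp (XX p n) (XX p (n + 1)), Finset.sum_range_succ]
    have hle : XX p n ≤ XX p (n + 1) := XX_mono (Nat.le_succ n)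
    have hint : (∫ s in XX p n..XX p (n + 1), phi p s) ≤
        ∫ _s in XX p n..XX p (n + 1), cc p n := by
      refine intervalIntegral.integral_mono_on hle (phi_intInt hp _ _)
        (intervalIntegrable_const) fun u hu => ?_
      exact (phi_anti hp hu.1).trans_eq (phi_XX hp n)
    rw [intervalIntegral.integral_const, smul_eq_mul] at hint
    have hxs : XX p (n + 1) - XX p n = cc p n := by rw [XX_succ]; ring
    rw [hxs] at hint
    linarith

lemma FF_cont (hp : 0 < p) : Continuous (FF p) :=
  continuous_iff_continuousAt.2 fun x => (FF_hasDerivAt hp x).continuousAt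

lemma FF_le (hp : 0 < p) (hp2 : 1 < 2 * p) (x : ℝ) :
    FF p x ≤ ∑' k, cc p k * cc p k := by
  have hsum := summable_ccsq hp hp2
  have hbound : ∀ n, FF p (XX p n) ≤ ∑' k, cc p k * cc p k := fun n =>
    (FF_XX_le hp n).trans (Summable.sum_le_tsum (Finset.range n)
      (fun i _ => mul_nonneg (cc_pos i).le (cc_pos i).le) hsum)
  by_cases hx : ∃ n, x ≤ XX p n
  · obtain ⟨n, hn⟩ := hx
    exact (FF_mono hp hn).trans (hbound n)
  · push_neg at hx
    have hbdd : BddAbove (Set.range (XX p)) := ⟨x, by rintro _ ⟨n, rfl⟩; exact (hx n).le⟩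
    set L := ⨆ n, XX p n with hL
    have hLx : L ≤ x := ciSup_le fun n => (hx n).le
    have htend : Tendsto (XX p) atTop (𝓝 L) := tendsto_atTop_ciSup XX_mono hbdd
    have hFL : FF p L ≤ ∑' k, cc p k * cc p k :=
      le_of_tendsto (((FF_cont hp).continuousAt).tendsto.comp htend)
        (Filter.Eventually.of_forall hbound)
    have hphi0 : ∀ t ∈ Set.uIcc L x, phi p t = 0 := by
      intro t ht
      rw [Set.uIcc_of_le hLx] at ht
      have hXt : ∀ k, XX p k ≤ t := fun k => (le_ciSup hbdd k).trans ht.1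
      have hle0 : phi p t ≤ 0 := by
        refine ge_of_tendsto (cc_tendsto hp) (Filter.Eventually.of_forall fun k => ?_)
        exact (phi_anti hp (hXt k)).trans_eq (phi_XX hp k)
      exact le_antisymm hle0 (phi_nonneg t)
    have hzero : (∫ s in L..x, phi p s) = 0 := by
      rw [intervalIntegral.integral_congr hphi0]
      simp
    rw [FF_add hp L x, hzero, add_zero]
    exact hFL

end DCAslow


/-- Slow convergence of the DCA even on a convex objective: with `g x = x²/2`,
for every `δ > 0` there is a convex, continuously differentiable `h : ℝ → ℝ`
with `1`-Lipschitz derivative such that `f = g - h` is convex and bounded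
below, while the DCA iterates starting from `x₀ = 0` satisfy
`|f' (x k)|² = 1/(k+1)^(1+2δ)` for all `k`. -/
theorem dca_slow_on_convex_objective :
    ∀ δ : ℝ, 0 < δ → ∃ h : ℝ → ℝ,
      ConvexOn ℝ Set.univ h ∧
      Differentiable ℝ h ∧ Continuous (deriv h) ∧
      (∀ a b : ℝ, |deriv h a - deriv h b| ≤ |a - b|) ∧
      ConvexOn ℝ Set.univ (fun t : ℝ => t ^ 2 / 2 - h t) ∧
      (∃ c : ℝ, ∀ t : ℝ, t ^ 2 / 2 - h t ≥ c) ∧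
      ∃ x : ℕ → ℝ, x 0 = 0 ∧
        (∀ k : ℕ, ∀ y : ℝ,
          (x (k + 1)) ^ 2 / 2 - deriv h (x k) * (x (k + 1) - x k) ≤
            y ^ 2 / 2 - deriv h (x k) * (y - x k)) ∧
        (∀ k : ℕ,
          |deriv (fun t : ℝ => t ^ 2 / 2 - h t) (x k)| ^ 2 =
            1 / ((k : ℝ) + 1) ^ (1 + 2 * δ)) := by
  intro δ hδ
  set p : ℝ := (1 + 2 * δ) / 2 with hpdef
  have hp : 0 < p := by rw [hpdef]; linarith
  have hp2 : 1 < 2 * p := by rw [hpdef]; linarith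
  refine ⟨DCAslow.hh p, DCAslow.hh_convex hp, DCAslow.hh_diff hp, ?_, ?_, DCAslow.ff_convex hp,
    ?_, DCAslow.XX p, DCAslow.XX_zero, ?_, ?_⟩
  · rw [DCAslow.hh_deriv hp]
    exact continuous_id.add (DCAslow.phi_cont hp)
  · intro a b
    rw [DCAslow.hh_deriv hp]
    simp only []
    rcases le_total a b with hab | hab
    · have h1 : DCAslow.phi p b ≤ DCAslow.phi p a := DCAslow.phi_anti hp hab
      have h2 := DCAslow.phi_lip hp hab
      rw [abs_of_nonpos (by linarith : a - b ≤ 0), abs_le]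
      constructor <;> linarith
    · have h1 : DCAslow.phi p a ≤ DCAslow.phi p b := DCAslow.phi_anti hp hab
      have h2 := DCAslow.phi_lip hp hab
      rw [abs_of_nonneg (by linarith : (0:ℝ) ≤ a - b), abs_le]
      constructor <;> linarith
  · refine ⟨-(∑' k, DCAslow.cc p k * DCAslow.cc p k), fun t => ?_⟩
    have h1 : t ^ 2 / 2 - DCAslow.hh p t = -(DCAslow.FF p t) := by
      simp [DCAslow.hh, DCAslow.FF]
    rw [h1]
    have := DCAslow.FF_le hp hp2 t
    linarith
  · intro k y
    have hd : deriv (DCAslow.hh p) (DCAslow.XX p k) = DCAslow.XX p (k + 1) := by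
      rw [DCAslow.hh_deriv hp]
      simp only []
      rw [DCAslow.phi_XX hp, DCAslow.XX_succ]
    rw [hd]
    nlinarith [sq_nonneg (y - DCAslow.XX p (k + 1))]
  · intro k
    rw [DCAslow.ff_deriv hp]
    simp only []
    rw [DCAslow.phi_XX hp, abs_neg, abs_of_pos (DCAslow.cc_pos k), pow_two]
    rw [DCAslow.cc, ← Real.rpow_add (by positivity)]
    have he : -p + -p = -(1 + 2 * δ) := by rw [hpdef]; ring
    rw [he, Real.rpow_neg (by positivity), one_div]
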